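/- (Theorem: R-matrix relation at a crossing.) Let p₁,q₁,p₂,q₂ be real numbers with p₁≠q₁, p₂≠q₂, p₁≠q₂, and let φ_{11}, φ_{12}, φ_{21}, φ_{22} ∈ ℝ^m be vectors satisfying (p₁−p₂) φ_{11} + (q₁−q₂) φ_{22} = (p₁−q₂) φ_{12} + (q₁−p₂) φ_{21}. Define û_{11,21} = (φ_{11}−φ_{21})/(p₁−q₁), û_{21,22} = (φ_{21}−φ_{22})/(p₂−q₂), û_{12,22} = (φ_{12}−φ_{22})/(p₁−q₁), û_{11,12} = (φ_{11}−φ_{12})/(p₂−q₂). Then ((p₁−p₂)/(p₁−q₂)) û_{11,21} + ((p₂−q₂)/(p₁−q₂)) û_{21,22} = û_{12,22} and ((p₁−q₁)/(p₁−q₂)) û_{11,21} + ((q₁−q₂)/(p₁−q₂)) û_{21,22} = û_{11,12}; that is, the pair (û_{11,21}, û_{21,22}) is mapped to (û_{12,22}, û_{11,12}) by right multiplication with the 2×2 R-matrix R(p₁,q₁;p₂,q₂) with rows ((p₁−p₂)/(p₁−q₂), (p₁−q₁)/(p₁−q₂)) and ((p₂−q₂)/(p₁−q₂), (q₁−q₂)/(p₁−q₂)).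 -/

import Mathlib

/-- R-matrix relation at a crossing: the normalized polarizations
`(û_{11,21}, û_{21,22})` are mapped to `(û_{12,22}, û_{11,12})` by right multiplication
with the R-matrix `R(p₁,q₁;p₂,q₂)`. -/
theorem stmt_15 {m : ℕ} (p₁ q₁ p₂ q₂ : ℝ)
    (h1 : p₁ ≠ q₁) (h2 : p₂ ≠ q₂) (h3 : p₁ ≠ q₂)
    (φ₁₁ φ₁₂ φ₂₁ φ₂₂ : Fin m → ℝ)
    (hcross : (p₁ - p₂) • φ₁₁ + (q₁ - q₂) • φ₂₂ = (p₁ - q₂) • φ₁₂ + (q₁ - p₂) • φ₂₁)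
    (u1121 u2122 u1222 u1112 : Fin m → ℝ)
    (hu1121 : u1121 = (p₁ - q₁)⁻¹ • (φ₁₁ - φ₂₁))
    (hu2122 : u2122 = (p₂ - q₂)⁻¹ • (φ₂₁ - φ₂₂))
    (hu1222 : u1222 = (p₁ - q₁)⁻¹ • (φ₁₂ - φ₂₂))
    (hu1112 : u1112 = (p₂ - q₂)⁻¹ • (φ₁₁ - φ₁₂)) :
    ((p₁ - p₂) / (p₁ - q₂)) • u1121 + ((p₂ - q₂) / (p₁ - q₂)) • u2122 = u1222 ∧
    ((p₁ - q₁) / (p₁ - q₂)) • u1121 + ((q₁ - q₂) / (p₁ - q₂)) • u2122 = u1112 := by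
  have e1 : p₁ - q₁ ≠ 0 := sub_ne_zero.mpr h1
  have e2 : p₂ - q₂ ≠ 0 := sub_ne_zero.mpr h2
  have e3 : p₁ - q₂ ≠ 0 := sub_ne_zero.mpr h3
  subst hu1121 hu2122 hu1222 hu1112
  constructor <;> funext x <;>
    have hc := congrFun hcross x <;>
    simp only [Pi.add_apply, Pi.smul_apply, Pi.sub_apply, smul_eq_mul] at hc ⊢ <;>
    field_simp <;>
    first
      | linear_combination hc
      | linear_combination -hc
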